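/- Under Assumption A with N(x) = 1/γ³, the approximate refraction coefficient converges to the desired one at the ball centers: lim_{m→∞} max_{1≤l≤(mP)³} |n²(x_l) - n²_{a_{mP}}(x_l)| = 0. -/

import Mathlib

set_option maxHeartbeats 800000


open Filter

theorem stmt_14 (k γ κ : ℝ) (hk : 0 < k) (hγ : 0 < γ) (hκ : κ ∈ Set.Ioo (0:ℝ) 1)
    (P : ℕ) (hP : 1 ≤ P) (a : ℕ → ℝ)
    (ha : ∀ m : ℕ, 1 ≤ m → 0 < a m ∧
      1 / ((m : ℝ) * P) - 2 * a m = γ * (a m) ^ ((2 - κ) / 3))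
    (D : Set (EuclideanSpace ℝ (Fin 3)))
    (hD : D = {y | ∀ i : Fin 3, y i ∈ Set.Icc (0:ℝ) 1})
    (n0sq nsq p : EuclideanSpace ℝ (Fin 3) → ℂ)
    (hp : ∀ x, p x = (k : ℂ) ^ 2 * (n0sq x - nsq x))
    (nasq : ℕ → EuclideanSpace ℝ (Fin 3) → ℂ)
    (hnasq : ∀ m x, nasq m x =
      n0sq x - (k : ℂ) ^ (-2 : ℤ) * p x *
        (((γ * m * P * (a m) ^ ((2 - κ) / 3)) : ℝ) : ℂ) ^ 3)
    (pnorm : ℝ) (hpnorm : ∀ x ∈ D, ‖p x‖ ≤ pnorm)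
    (xc : (m : ℕ) → Fin ((m * P) ^ 3) → EuclideanSpace ℝ (Fin 3))
    (hxc : ∀ m l, xc m l ∈ D) :
    Tendsto (fun m : ℕ =>
        ⨆ l : Fin ((m * P) ^ 3), ‖nsq (xc m l) - nasq m (xc m l)‖)
      atTop (nhds 0) := by
  obtain ⟨hκ0, hκ1⟩ := hκ
  set e : ℝ := (2 - κ) / 3 with he
  have he0 : 0 < e := by rw [he]; linarith
  have he1 : e ≤ 1 := by rw [he]; linarith
  have heneg : e - 1 < 0 := by linarith
  have hPpos : (0:ℝ) < P := by exact_mod_cast Nat.lt_of_lt_of_le Nat.zero_lt_one hP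
  have hpnn : 0 ≤ pnorm := by
    refine le_trans (norm_nonneg _) (hpnorm 0 ?_)
    rw [hD]; intro i; simp [Set.mem_Icc]
  -- key per-m facts
  have key : ∀ m : ℕ, 1 ≤ m →
      0 < a m * ((m:ℝ) * P) ∧ a m * ((m:ℝ) * P) ≤ ((m:ℝ) * P) ^ (e - 1) / γ ∧
      γ * m * P * (a m) ^ e = 1 - 2 * (a m * ((m:ℝ) * P)) := by
    intro m hm
    obtain ⟨hapos, heq⟩ := ha m hm
    have hm1 : (1:ℝ) ≤ (m:ℝ) := by exact_mod_cast hm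
    have hP1 : (1:ℝ) ≤ (P:ℝ) := by exact_mod_cast hP
    have hmp : (1:ℝ) ≤ (m:ℝ) * P := by nlinarith
    have hmp0 : (0:ℝ) < (m:ℝ) * P := lt_of_lt_of_le zero_lt_one hmp
    have hrpos : 0 < (a m) ^ e := Real.rpow_pos_of_pos hapos e
    set t := a m * ((m:ℝ) * P) with ht
    have htpos : 0 < t := mul_pos hapos hmp0
    have hlt : 2 * a m < 1 / ((m:ℝ) * P) := by nlinarith [mul_pos hγ hrpos]
    have ht1 : t ≤ 1 := by
      have h2 := (mul_lt_mul_of_pos_right hlt hmp0)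
      rw [div_mul_cancel₀ 1 (ne_of_gt hmp0)] at h2
      nlinarith
    have hc : γ * m * P * (a m) ^ e = 1 - 2 * t := by
      have h3 := congrArg (fun z => z * ((m:ℝ) * P)) heq
      rw [sub_mul, one_div, inv_mul_cancel₀ (ne_of_gt hmp0)] at h3
      nlinarith [h3]
    refine ⟨htpos, ?_, hc⟩
    have hγa : γ * (a m) ^ e ≤ 1 / ((m:ℝ) * P) := by nlinarith
    have hae : a m = t / ((m:ℝ) * P) := by rw [ht, mul_div_assoc, div_self (ne_of_gt hmp0), mul_one]
    have htrw : (a m) ^ e = t ^ e * ((m:ℝ) * P) ^ (-e) := by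
      rw [hae, Real.div_rpow (le_of_lt htpos) (le_of_lt hmp0),
        Real.rpow_neg (le_of_lt hmp0), div_eq_mul_inv]
    have hpe : (0:ℝ) < ((m:ℝ) * P) ^ e := Real.rpow_pos_of_pos hmp0 e
    have hte : γ * t ^ e ≤ ((m:ℝ) * P) ^ (e - 1) := by
      rw [htrw] at hγa
      have h := mul_le_mul_of_nonneg_right hγa hpe.le
      calc γ * t ^ e = γ * (t ^ e * ((m:ℝ)*P) ^ (-e)) * ((m:ℝ)*P) ^ e := by
            rw [mul_assoc, mul_assoc, ← Real.rpow_add hmp0]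
            simp
        _ ≤ 1 / ((m:ℝ)*P) * ((m:ℝ)*P) ^ e := h
        _ = ((m:ℝ)*P) ^ (e-1) := by
            rw [Real.rpow_sub hmp0, Real.rpow_one]
            ring
    have htte : t ≤ t ^ e := by
      have := Real.rpow_le_rpow_of_exponent_ge htpos ht1 he1
      rwa [Real.rpow_one] at this
    rw [le_div_iff₀ hγ]
    calc t * γ = γ * t := by ring
      _ ≤ γ * t ^ e := mul_le_mul_of_nonneg_left htte hγ.le
      _ ≤ ((m:ℝ)*P) ^ (e-1) := hte
  -- t m → 0
  have hmpTop : Tendsto (fun m : ℕ => (m:ℝ) * P) atTop atTop :=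
    (tendsto_natCast_atTop_atTop).atTop_mul_const hPpos
  have hbound0 : Tendsto (fun m : ℕ => ((m:ℝ) * P) ^ (e - 1) / γ) atTop (nhds 0) := by
    have h := (tendsto_rpow_neg_atTop (by linarith : (0:ℝ) < -(e-1))).comp hmpTop
    have h0 : Tendsto (fun m : ℕ => ((m:ℝ) * P) ^ (e - 1)) atTop (nhds 0) := by
      simp only [neg_neg] at h; exact h
    simpa using h0.div_const γ
  have htz : Tendsto (fun m : ℕ => a m * ((m:ℝ) * P)) atTop (nhds 0) := by
    apply squeeze_zero' (Eventually.mono (eventually_ge_atTop 1) fun m hm => (key m hm).1.le)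
      (Eventually.mono (eventually_ge_atTop 1) fun m hm => (key m hm).2.1) hbound0
  -- c m → 1
  have hcz : Tendsto (fun m : ℕ => γ * m * P * (a m) ^ e) atTop (nhds 1) := by
    have h1 : Tendsto (fun m : ℕ => 1 - 2 * (a m * ((m:ℝ) * P))) atTop (nhds 1) := by
      have := htz.const_mul (2:ℝ)
      have h2 := (tendsto_const_nhds (x := (1:ℝ)) (f := atTop)).sub this
      simpa using h2
    refine h1.congr' ?_
    filter_upwards [eventually_ge_atTop 1] with m hm
    exact ((key m hm).2.2).symm
  -- bound m → 0
  have hbnd : Tendsto (fun m : ℕ => k ^ (-2:ℤ) * pnorm * |(γ * m * P * (a m) ^ e) ^ 3 - 1|)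
      atTop (nhds 0) := by
    have h3 : Tendsto (fun m : ℕ => (γ * m * P * (a m) ^ e) ^ 3 - 1) atTop (nhds 0) := by
      have := (hcz.pow 3).sub (tendsto_const_nhds (x := (1:ℝ)))
      simpa using this
    have habs : Tendsto (fun m : ℕ => |(γ * m * P * (a m) ^ e) ^ 3 - 1|) atTop (nhds 0) := by
      simpa using h3.abs
    simpa using habs.const_mul (k ^ (-2:ℤ) * pnorm)
  -- squeeze
  apply squeeze_zero'
  · filter_upwards [eventually_ge_atTop 1] with m hm
    exact Real.iSup_nonneg fun l => norm_nonneg _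
  · filter_upwards [eventually_ge_atTop 1] with m hm
    have hNpos : 0 < (m * P) ^ 3 := by positivity
    haveI : Nonempty (Fin ((m * P) ^ 3)) := ⟨⟨0, hNpos⟩⟩
    apply ciSup_le
    intro l
    set x := xc m l with hx
    have hk2 : ((k:ℂ) ^ 2) ≠ 0 := by
      simp [pow_eq_zero_iff]
      exact_mod_cast ne_of_gt hk
    have hdiff : nsq x - nasq m x =
        (k:ℂ) ^ (-2:ℤ) * p x * ((((γ * m * P * (a m) ^ e) : ℝ) : ℂ) ^ 3 - 1) := by
      have hn : (k:ℂ) ^ (-2:ℤ) * p x = n0sq x - nsq x := by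
        rw [hp x, zpow_neg]
        field_simp
        exact mul_div_cancel_left₀ _ (by exact_mod_cast ne_of_gt hk : (k:ℂ) ≠ 0)
      rw [hnasq m x]
      linear_combination hn
    rw [hdiff]
    rw [norm_mul, norm_mul]
    have h1 : ‖(k:ℂ) ^ (-2:ℤ)‖ = k ^ (-2:ℤ) := by
      rw [norm_zpow, Complex.norm_real, Real.norm_eq_abs, abs_of_pos hk]
    have h2 : ‖(((γ * m * P * (a m) ^ e) : ℝ) : ℂ) ^ 3 - 1‖ =
        |(γ * m * P * (a m) ^ e) ^ 3 - 1| := by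
      have : ((((γ * m * P * (a m) ^ e) : ℝ) : ℂ) ^ 3 - 1) =
          ((((γ * m * P * (a m) ^ e) ^ 3 - 1 : ℝ)) : ℂ) := by push_cast; ring
      rw [this, Complex.norm_real, Real.norm_eq_abs]
    rw [h1, h2]
    have hpx := hpnorm x (hxc m l)
    have hk2' : (0:ℝ) ≤ k ^ (-2:ℤ) := le_of_lt (zpow_pos hk _)
    exact mul_le_mul_of_nonneg_right (mul_le_mul_of_nonneg_left hpx hk2') (abs_nonneg _)
  · exact hbnd
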